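/- Let d ≥ 2, ε ∈ (0,1), and let S = {γ₁, …, γ_{2r}} ⊂ SL_d(ℝ) be a symmetric set of pairwise distinct proximal matrices such that both S and the dual set S* are ε-Schottky, and set V = ⋂_{1 ≤ i ≤ 2r} B(γᵢ⁻, ε). Then for every infinite reduced word (xᵢ)_{i∈ℕ} in S there exists a point ξ((xᵢ)) ∈ ℙ(ℝ^d) such that for every v ∈ V, the sequence ((x₀ x₁ ⋯ x_n)(v))_{n∈ℕ} converges to ξ((xᵢ)) in the metric space (ℙ(ℝ^d), dist). -/

import Mathlib

open Polynomial Filter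
open scoped Classical

noncomputable section

namespace Amalgam

variable {W : Type*} [NormedAddCommGroup W] [NormedSpace ℝ W]

/-- The distance between two subspaces of a normed space: the infimum of `‖x - y‖` over
unit vectors `x ∈ X`, `y ∈ Y`.  For one-dimensional subspaces this is the metric on
projective space; for a line and a hyperplane it is the distance from the point of
projective space to the subset of projective space determined by the hyperplane. -/
def sdist (X Y : Submodule ℝ W) : ℝ :=
  sInf {r : ℝ | ∃ x ∈ X, ∃ y ∈ Y, ‖x‖ = 1 ∧ ‖y‖ = 1 ∧ r = ‖x - y‖}

/-- A point of projective space, i.e. a line through the origin. -/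
def IsLine (X : Submodule ℝ W) : Prop := Module.finrank ℝ X = 1

/-- The diameter of the projective space of `W`. -/
def projDiam (W : Type*) [NormedAddCommGroup W] [NormedSpace ℝ W] : ℝ :=
  sSup {t : ℝ | ∃ X Y : Submodule ℝ W, IsLine X ∧ IsLine Y ∧ t = sdist X Y}

variable [FiniteDimensional ℝ W]

/-- `f` is proximal: its characteristic polynomial has a unique complex root of maximal
modulus, and this root is real with multiplicity one. -/
def IsProximal (f : W →ₗ[ℝ] W) : Prop :=
  ∃ lam : ℝ,
    (Polynomial.map (algebraMap ℝ ℂ) (LinearMap.charpoly f)).roots.count (lam : ℂ) = 1 ∧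
    ∀ μ ∈ (Polynomial.map (algebraMap ℝ ℂ) (LinearMap.charpoly f)).roots,
      μ ≠ (lam : ℂ) → ‖μ‖ < |lam|

/-- The top eigenvalue of a proximal transformation (junk value `0` otherwise). -/
def topEig (f : W →ₗ[ℝ] W) : ℝ :=
  if h : IsProximal f then h.choose else 0

/-- The attracting eigenline `γ⁺` of a proximal transformation: the eigenspace of the
eigenvalue of maximal modulus. -/
def attLine (f : W →ₗ[ℝ] W) : Submodule ℝ W :=
  LinearMap.ker (f - topEig f • LinearMap.id)

/-- The repelling hyperplane `γ⁻` of a proximal transformation: the unique invariant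
complement of the attracting line. -/
def repHyp (f : W →ₗ[ℝ] W) : Submodule ℝ W :=
  if h : ∃ H : Submodule ℝ W, Submodule.map f H ≤ H ∧ IsCompl (attLine f) H
  then h.choose else ⊥

/-- `f` is `ε`-proximal: it is proximal, `dist(γ⁺, γ⁻) ≥ 2ε`, the induced action on
projective space is `ε`-Lipschitz on `B(γ⁻, ε)`, and maps `B(γ⁻, ε)` into `b(γ⁺, ε)`. -/
def IsEpsProximal (ε : ℝ) (f : W →ₗ[ℝ] W) : Prop :=
  IsProximal f ∧
  2 * ε ≤ sdist (attLine f) (repHyp f) ∧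
  (∀ X Y : Submodule ℝ W, IsLine X → IsLine Y →
      ε ≤ sdist X (repHyp f) → ε ≤ sdist Y (repHyp f) →
      sdist (X.map f) (Y.map f) ≤ ε * sdist X Y) ∧
  (∀ X : Submodule ℝ W, IsLine X → ε ≤ sdist X (repHyp f) →
      ε ≥ sdist (X.map f) (attLine f))

/-- An indexed family `f` (with `g i` playing the role of `(f i)⁻¹`) is `ε`-Schottky:
each member is `ε`-proximal and `dist((fᵢ)⁺, (fⱼ⁻¹)⁻) ≥ 6ε` for `i ≠ j`. -/
def IsSchottkyFam {ι : Type*} (ε : ℝ) (f g : ι → (W →ₗ[ℝ] W)) : Prop :=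
  (∀ i, IsEpsProximal ε (f i)) ∧
  ∀ i j, i ≠ j → 6 * ε ≤ sdist (attLine (f i)) (repHyp (g j))


abbrev E (d : ℕ) := EuclideanSpace ℝ (Fin d)
abbrev SL (d : ℕ) := Matrix.SpecialLinearGroup (Fin d) ℝ
abbrev Dual' (d : ℕ) := StrongDual ℝ (E d)

/-- The linear endomorphism of Euclidean space determined by a matrix in `SL_d(ℝ)`. -/
def toEnd {d : ℕ} (g : SL d) : E d →ₗ[ℝ] E d :=
  Matrix.toEuclideanLin (g : Matrix (Fin d) (Fin d) ℝ)

/-- The same map as a continuous linear map. -/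
def toCLM {d : ℕ} (g : SL d) : E d →L[ℝ] E d :=
  LinearMap.toContinuousLinearMap (toEnd g)

/-- The dual transformation `γ* : θ ↦ θ ∘ γ⁻¹` acting on the dual space `(ℝ^d)*`
(equipped with the dual norm). -/
def dualEnd {d : ℕ} (g : SL d) : Dual' d →ₗ[ℝ] Dual' d where
  toFun θ := θ.comp (toCLM g⁻¹)
  map_add' θ₁ θ₂ := by ext v; simp
  map_smul' c θ := by ext v; simp

/-- The kernel of a set of functionals: `{v : φ(v) = 0 for all φ ∈ Y}`. -/
def dualKer {d : ℕ} (Y : Submodule ℝ (Dual' d)) : Submodule ℝ (E d) where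
  carrier := {v | ∀ φ ∈ Y, φ v = 0}
  add_mem' := by
    intro a b ha hb φ hφ
    simp [map_add, ha φ hφ, hb φ hφ]
  zero_mem' := by intro φ hφ; simp
  smul_mem' := by
    intro c a ha φ hφ
    simp [ha φ hφ]

/-- The annihilator of a subspace inside the dual space. -/
def annih {d : ℕ} (U : Submodule ℝ (E d)) : Submodule ℝ (Dual' d) where
  carrier := {φ | ∀ v ∈ U, φ v = 0}
  add_mem' := by
    intro a b ha hb v hv
    simp [ha v hv, hb v hv]
  zero_mem' := by intro v hv; simp
  smul_mem' := by
    intro c a ha v hv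
    simp [ha v hv]

/-- The operator norm of `g ∈ SL_d(ℝ)` (with respect to the Euclidean norm). -/
def opN {d : ℕ} (g : SL d) : ℝ := ‖toCLM g‖

/-- The second compound matrix of a `d × d` matrix: the matrix of `2 × 2` minors,
indexed by increasingly ordered pairs. -/
def compound2 {d : ℕ} (g : Matrix (Fin d) (Fin d) ℝ) :
    Matrix {p : Fin d × Fin d // p.1 < p.2} {p : Fin d × Fin d // p.1 < p.2} ℝ :=
  fun p q => g p.1.1 q.1.1 * g p.1.2 q.1.2 - g p.1.1 q.1.2 * g p.1.2 q.1.1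

/-- The operator norm of the second compound matrix (Euclidean norms). -/
def c2norm {d : ℕ} (g : Matrix (Fin d) (Fin d) ℝ) : ℝ :=
  ‖LinearMap.toContinuousLinearMap (Matrix.toEuclideanLin (compound2 g))‖


/-- A reduced word in the set `S`: a nonempty finite sequence of elements of `S` in which
no letter is followed by its inverse. -/
def IsReducedWord {d : ℕ} (S : Set (SL d)) (w : List (SL d)) : Prop :=
  w ≠ [] ∧ (∀ a ∈ w, a ∈ S) ∧ List.Chain' (fun a b => b ≠ a⁻¹) w

/-- An infinite reduced word in the set `S`. -/
def IsInfReducedWord {d : ℕ} (S : Set (SL d)) (x : ℕ → SL d) : Prop :=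
  (∀ i, x i ∈ S) ∧ ∀ i, x (i + 1) ≠ (x i)⁻¹

/-- The partial product `x₀ x₁ ⋯ x_n` of an infinite word. -/
def wordProd {d : ℕ} (x : ℕ → SL d) (n : ℕ) : SL d :=
  ((List.range (n + 1)).map x).prod

/-- A family of matrices is symmetric if it is closed under inverses. -/
def SymmFam {ι : Type*} {d : ℕ} (γ : ι → SL d) : Prop :=
  ∀ i, ∃ j, γ j = (γ i)⁻¹

/-- The family `γ` is `ε`-Schottky as acting on `ℙ(ℝ^d)`. -/
def PrimalSchottky {ι : Type*} {d : ℕ} (ε : ℝ) (γ : ι → SL d) : Prop :=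
  IsSchottkyFam ε (fun i => toEnd (γ i)) (fun i => toEnd ((γ i)⁻¹))

/-- The dual family `γ*` is `ε`-Schottky as acting on `ℙ((ℝ^d)*)`. -/
def DualSchottky {ι : Type*} {d : ℕ} (ε : ℝ) (γ : ι → SL d) : Prop :=
  IsSchottkyFam ε (fun i => dualEnd (γ i)) (fun i => dualEnd ((γ i)⁻¹))

/-- `g` is biproximal: both `g` and `g⁻¹` are proximal. -/
def IsBiproximal {d : ℕ} (g : SL d) : Prop :=
  IsProximal (toEnd g) ∧ IsProximal (toEnd g⁻¹)

/-- A symmetric family of pairwise distinct biproximal matrices is well-positioned if the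
attracting lines are pairwise distinct and `γᵢ⁺ ⊄ γⱼ⁻` whenever `γⱼ ≠ γᵢ⁻¹`. -/
def WellPositioned {ι : Type*} {d : ℕ} (γ : ι → SL d) : Prop :=
  (∀ i, IsBiproximal (γ i)) ∧
  (∀ i j, i ≠ j → attLine (toEnd (γ i)) ≠ attLine (toEnd (γ j))) ∧
  (∀ i j, γ j ≠ (γ i)⁻¹ → ¬ attLine (toEnd (γ i)) ≤ repHyp (toEnd (γ j)))

/-- The spectral radius: maximal modulus of the complex roots of the characteristic
polynomial. -/
def specRad {W : Type*} [NormedAddCommGroup W] [NormedSpace ℝ W] [FiniteDimensional ℝ W]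
    (f : W →ₗ[ℝ] W) : ℝ :=
  sSup {t : ℝ | ∃ μ ∈ (Polynomial.map (algebraMap ℝ ℂ) (LinearMap.charpoly f)).roots,
      t = ‖μ‖}

section Aux

variable {W : Type*} [NormedAddCommGroup W] [NormedSpace ℝ W]

lemma sdist_nonneg' (X Y : Submodule ℝ W) : 0 ≤ sdist X Y := by
  apply Real.sInf_nonneg
  rintro r ⟨x, hx, y, hy, h1, h2, rfl⟩
  positivity

lemma sdist_le' {X Y : Submodule ℝ W} {x y : W} (hx : x ∈ X) (hy : y ∈ Y)
    (h1 : ‖x‖ = 1) (h2 : ‖y‖ = 1) : sdist X Y ≤ ‖x - y‖ := by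
  apply csInf_le
  · exact ⟨0, by rintro r ⟨a, -, b, -, -, -, rfl⟩; positivity⟩
  · exact ⟨x, hx, y, hy, h1, h2, rfl⟩

lemma sdist_comm' (X Y : Submodule ℝ W) : sdist X Y = sdist Y X := by
  unfold sdist
  congr 1
  ext r
  constructor <;> rintro ⟨x, hx, y, hy, h1, h2, rfl⟩ <;>
    exact ⟨y, hy, x, hx, h2, h1, (norm_sub_rev _ _).symm⟩

lemma exists_unit_of_isLine {X : Submodule ℝ W} (hX : IsLine X) : ∃ x ∈ X, ‖x‖ = 1 := by
  have hbot : X ≠ ⊥ := by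
    intro h
    rw [h] at hX
    simp [IsLine, finrank_bot] at hX
  obtain ⟨x, hx, hx0⟩ := Submodule.ne_bot_iff X |>.mp hbot
  refine ⟨‖x‖⁻¹ • x, X.smul_mem _ hx, ?_⟩
  rw [norm_smul, norm_inv, norm_norm, inv_mul_cancel₀ (norm_ne_zero_iff.mpr hx0)]

lemma eq_or_eq_neg_of_isLine [FiniteDimensional ℝ W] {X : Submodule ℝ W} (hX : IsLine X)
    {x y : W} (hx : x ∈ X) (hy : y ∈ X) (h1 : ‖x‖ = 1) (h2 : ‖y‖ = 1) :
    y = x ∨ y = -x := by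
  have hx0 : x ≠ 0 := by intro h; rw [h, norm_zero] at h1; norm_num at h1
  have hspan : Submodule.span ℝ {x} = X := by
    apply Submodule.eq_of_le_of_finrank_le
    · exact Submodule.span_le.mpr (by simpa using hx)
    · rw [finrank_span_singleton hx0]; exact le_of_eq hX
  rw [← hspan] at hy
  obtain ⟨c, rfl⟩ := Submodule.mem_span_singleton.mp hy
  rw [norm_smul, h1, mul_one] at h2
  rcases abs_eq (by norm_num : (0:ℝ) ≤ 1) |>.mp h2 with hc | hc
  · left; rw [hc, one_smul]
  · right; rw [hc, neg_one_smul]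

lemma sdist_triangle' [FiniteDimensional ℝ W] {X Y Z : Submodule ℝ W} (hY : IsLine Y)
    (hXu : ∃ x ∈ X, ‖x‖ = 1) (hZu : ∃ z ∈ Z, ‖z‖ = 1) :
    sdist X Z ≤ sdist X Y + sdist Y Z := by
  obtain ⟨y0, hy0, hy0n⟩ := exists_unit_of_isLine hY
  obtain ⟨x0, hx0, hx0n⟩ := hXu
  obtain ⟨z0, hz0, hz0n⟩ := hZu
  set A := {r : ℝ | ∃ x ∈ X, ∃ y ∈ Y, ‖x‖ = 1 ∧ ‖y‖ = 1 ∧ r = ‖x - y‖} with hA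
  set B := {r : ℝ | ∃ x ∈ Y, ∃ y ∈ Z, ‖x‖ = 1 ∧ ‖y‖ = 1 ∧ r = ‖x - y‖} with hB
  have hAne : A.Nonempty := ⟨_, x0, hx0, y0, hy0, hx0n, hy0n, rfl⟩
  have hBne : B.Nonempty := ⟨_, y0, hy0, z0, hz0, hy0n, hz0n, rfl⟩
  have key : ∀ a ∈ A, ∀ b ∈ B, sdist X Z ≤ a + b := by
    rintro a ⟨x, hx, y, hy, hxn, hyn, rfl⟩ b ⟨y', hy', z, hz, hy'n, hzn, rfl⟩
    rcases eq_or_eq_neg_of_isLine hY hy hy' hyn hy'n with h | h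
    · calc sdist X Z ≤ ‖x - z‖ := sdist_le' hx hz hxn hzn
        _ ≤ ‖x - y‖ + ‖y - z‖ := norm_sub_le_norm_sub_add_norm_sub x y z
        _ = ‖x - y‖ + ‖y' - z‖ := by rw [h]
    · have hnz : ‖y' - z‖ = ‖y - -z‖ := by
        rw [h, show -y - z = -(y - -z) from by abel, norm_neg]
      calc sdist X Z ≤ ‖x - -z‖ :=
            sdist_le' hx (Z.neg_mem hz) hxn (by rw [norm_neg]; exact hzn)
        _ ≤ ‖x - y‖ + ‖y - -z‖ := norm_sub_le_norm_sub_add_norm_sub x y (-z)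
        _ = ‖x - y‖ + ‖y' - z‖ := by rw [hnz]
  have h1 : ∀ b ∈ B, sdist X Z - b ≤ sInf A := by
    intro b hb
    exact le_csInf hAne (fun a ha => by linarith [key a ha b hb])
  have h2 : sdist X Z - sInf A ≤ sInf B :=
    le_csInf hBne (fun b hb => by linarith [h1 b hb])
  have eA : sdist X Y = sInf A := rfl
  have eB : sdist Y Z = sInf B := rfl
  linarith [h2, eA, eB]

lemma sdist_le_two' {X Y : Submodule ℝ W} (hXu : ∃ x ∈ X, ‖x‖ = 1)
    (hYu : ∃ y ∈ Y, ‖y‖ = 1) : sdist X Y ≤ 2 := by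
  obtain ⟨x, hx, hxn⟩ := hXu
  obtain ⟨y, hy, hyn⟩ := hYu
  calc sdist X Y ≤ ‖x - y‖ := sdist_le' hx hy hxn hyn
    _ ≤ ‖x‖ + ‖y‖ := norm_sub_le x y
    _ = 2 := by rw [hxn, hyn]; norm_num

lemma exists_units_of_sdist_pos {X Y : Submodule ℝ W} (h : 0 < sdist X Y) :
    (∃ x ∈ X, ‖x‖ = 1) ∧ (∃ y ∈ Y, ‖y‖ = 1) := by
  have hne : {r : ℝ | ∃ x ∈ X, ∃ y ∈ Y, ‖x‖ = 1 ∧ ‖y‖ = 1 ∧ r = ‖x - y‖}.Nonempty := by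
    by_contra h'
    rw [Set.not_nonempty_iff_eq_empty] at h'
    unfold sdist at h
    rw [h', Real.sInf_empty] at h
    exact lt_irrefl 0 h
  obtain ⟨r, x, hx, y, hy, h1, h2, -⟩ := hne
  exact ⟨⟨x, hx, h1⟩, ⟨y, hy, h2⟩⟩

lemma min_le_sdist_line [FiniteDimensional ℝ W] {X Y : Submodule ℝ W}
    (hX : IsLine X) (hY : IsLine Y) {x y : W} (hx : x ∈ X) (hy : y ∈ Y)
    (h1 : ‖x‖ = 1) (h2 : ‖y‖ = 1) :
    min ‖x - y‖ ‖x + y‖ ≤ sdist X Y := by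
  have hne : {r : ℝ | ∃ a ∈ X, ∃ b ∈ Y, ‖a‖ = 1 ∧ ‖b‖ = 1 ∧ r = ‖a - b‖}.Nonempty :=
    ⟨‖x - y‖, x, hx, y, hy, h1, h2, rfl⟩
  apply le_csInf hne
  rintro r ⟨x', hx', y', hy', h1', h2', rfl⟩
  rcases eq_or_eq_neg_of_isLine hX hx hx' h1 h1' with hxx | hxx <;>
    rcases eq_or_eq_neg_of_isLine hY hy hy' h2 h2' with hyy | hyy <;> rw [hxx, hyy]
  · exact min_le_left _ _
  · rw [sub_neg_eq_add]; exact min_le_right _ _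
  · rw [show -x - y = -(x + y) from by abel, norm_neg]; exact min_le_right _ _
  · rw [show -x - -y = -(x - y) from by abel, norm_neg]; exact min_le_left _ _

lemma far_of_close [FiniteDimensional ℝ W] {ε : ℝ} (hε0 : 0 < ε)
    {z A H : Submodule ℝ W} (hz : IsLine z)
    (hclose : sdist z A ≤ ε) (hfar : 6 * ε ≤ sdist A H) : ε ≤ sdist z H := by
  have hpos : 0 < sdist A H := lt_of_lt_of_le (by linarith) hfar
  obtain ⟨hAu, hHu⟩ := exists_units_of_sdist_pos hpos
  have htri := sdist_triangle' hz hAu hHu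
  have hcomm : sdist A z = sdist z A := sdist_comm' _ _
  linarith

end Aux

section Aux2

variable {d : ℕ}

lemma toEnd_mul (g h : SL d) : toEnd (g * h) = (toEnd g).comp (toEnd h) := by
  unfold toEnd
  rw [Matrix.SpecialLinearGroup.coe_mul, Matrix.toEuclideanLin_eq_toLin, Matrix.toLin_mul _
    (PiLp.basisFun 2 ℝ (Fin d)) _]

lemma toEnd_one : toEnd (1 : SL d) = LinearMap.id := by
  unfold toEnd
  rw [Matrix.SpecialLinearGroup.coe_one, Matrix.toEuclideanLin_eq_toLin, Matrix.toLin_one]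

/-- `toEnd g` as a linear equivalence. -/
def toEquiv (g : SL d) : E d ≃ₗ[ℝ] E d :=
  LinearEquiv.ofLinear (toEnd g) (toEnd g⁻¹)
    (by rw [← toEnd_mul, mul_inv_cancel, toEnd_one])
    (by rw [← toEnd_mul, inv_mul_cancel, toEnd_one])

lemma toEquiv_coe (g : SL d) : (toEquiv g : E d →ₗ[ℝ] E d) = toEnd g := rfl

lemma isLine_map (g : SL d) {X : Submodule ℝ (E d)} (hX : IsLine X) :
    IsLine (X.map (toEnd g)) := by
  rw [← toEquiv_coe]
  unfold IsLine at *
  rw [LinearEquiv.finrank_map_eq]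
  exact hX

lemma wordProd_zero (x : ℕ → SL d) : wordProd x 0 = x 0 := by
  unfold wordProd
  rw [List.range_succ]
  simp

lemma wordProd_succ_right (x : ℕ → SL d) (n : ℕ) :
    wordProd x (n + 1) = wordProd x n * x (n + 1) := by
  unfold wordProd
  rw [List.range_succ, List.map_append, List.prod_append]
  simp

lemma wordProd_succ_left (x : ℕ → SL d) (n : ℕ) :
    wordProd x (n + 1) = x 0 * wordProd (fun k => x (k + 1)) n := by
  unfold wordProd
  rw [List.range_succ_eq_map]
  simp [List.map_map, Function.comp_def]

lemma schottky_far {r : ℕ} {ε : ℝ} {γ : Fin (2 * r) → SL d}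
    (hsym : SymmFam γ) (hS : PrimalSchottky ε γ)
    {a b : SL d} (ha : a ∈ Set.range γ) (hb : b ∈ Set.range γ) (hne : a ≠ b⁻¹) :
    6 * ε ≤ sdist (attLine (toEnd a)) (repHyp (toEnd b)) := by
  obtain ⟨i, rfl⟩ := ha
  obtain ⟨j, rfl⟩ := hb
  obtain ⟨j', hj'⟩ := hsym j
  have hij : i ≠ j' := by
    intro h
    rw [h, hj'] at hne
    exact hne rfl
  have := hS.2 i j' hij
  simp only [hj', inv_inv] at this
  exact this

end Aux2

section KeyClaim

lemma key_claim {d r : ℕ} {ε : ℝ} (hε0 : 0 < ε) (hε1 : ε < 1)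
    {γ : Fin (2 * r) → SL d} (hsym : SymmFam γ) (hS : PrimalSchottky ε γ) :
    ∀ n : ℕ, ∀ x : ℕ → SL d, IsInfReducedWord (Set.range γ) x →
      ∀ u u' : Submodule ℝ (E d), IsLine u → IsLine u' →
        ε ≤ sdist u (repHyp (toEnd (x n))) → ε ≤ sdist u' (repHyp (toEnd (x n))) →
        IsLine (Submodule.map (toEnd (wordProd x n)) u) ∧
        sdist (Submodule.map (toEnd (wordProd x n)) u) (attLine (toEnd (x 0))) ≤ ε ∧
        sdist (Submodule.map (toEnd (wordProd x n)) u)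
          (Submodule.map (toEnd (wordProd x n)) u') ≤ 2 * ε ^ (n + 1) := by
  intro n
  induction n with
  | zero =>
    intro x hx u u' hu hu' huf hu'f
    obtain ⟨i0, hi0⟩ := hx.1 0
    have hprox : IsEpsProximal ε (toEnd (x 0)) := by rw [← hi0]; exact hS.1 i0
    rw [wordProd_zero]
    refine ⟨isLine_map _ hu, hprox.2.2.2 u hu huf, ?_⟩
    have h2 := hprox.2.2.1 u u' hu hu' huf hu'f
    have hle2 : sdist u u' ≤ 2 :=
      sdist_le_two' (exists_unit_of_isLine hu) (exists_unit_of_isLine hu')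
    calc sdist _ _ ≤ ε * sdist u u' := h2
      _ ≤ ε * 2 := mul_le_mul_of_nonneg_left hle2 hε0.le
      _ = 2 * ε ^ (0 + 1) := by ring
  | succ n ih =>
    intro x hx u u' hu hu' huf hu'f
    have hx' : IsInfReducedWord (Set.range γ) (fun k => x (k + 1)) :=
      ⟨fun i => hx.1 (i + 1), fun i => hx.2 (i + 1)⟩
    obtain ⟨hzl, hzA, hzz'⟩ := ih (fun k => x (k + 1)) hx' u u' hu hu' huf hu'f
    obtain ⟨hzl', hz'A, -⟩ := ih (fun k => x (k + 1)) hx' u' u hu' hu hu'f huf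
    set z := Submodule.map (toEnd (wordProd (fun k => x (k + 1)) n)) u with hzdef
    set z' := Submodule.map (toEnd (wordProd (fun k => x (k + 1)) n)) u' with hz'def
    have hfar6 : 6 * ε ≤ sdist (attLine (toEnd (x 1))) (repHyp (toEnd (x 0))) :=
      schottky_far hsym hS (hx.1 1) (hx.1 0) (hx.2 0)
    have hzf : ε ≤ sdist z (repHyp (toEnd (x 0))) := far_of_close hε0 hzl hzA hfar6
    have hz'f : ε ≤ sdist z' (repHyp (toEnd (x 0))) := far_of_close hε0 hzl' hz'A hfar6
    have hmap : ∀ w : Submodule ℝ (E d), Submodule.map (toEnd (wordProd x (n + 1))) w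
        = Submodule.map (toEnd (x 0)) (Submodule.map (toEnd (wordProd (fun k => x (k + 1)) n)) w) := by
      intro w
      rw [wordProd_succ_left, toEnd_mul, Submodule.map_comp]
    obtain ⟨i0, hi0⟩ := hx.1 0
    have hprox : IsEpsProximal ε (toEnd (x 0)) := by rw [← hi0]; exact hS.1 i0
    rw [hmap u, hmap u']
    refine ⟨isLine_map _ hzl, hprox.2.2.2 z hzl hzf, ?_⟩
    have h2 := hprox.2.2.1 z z' hzl hzl' hzf hz'f
    calc sdist _ _ ≤ ε * sdist z z' := h2
      _ ≤ ε * (2 * ε ^ (n + 1)) := mul_le_mul_of_nonneg_left hzz' hε0.le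
      _ = 2 * ε ^ (n + 1 + 1) := by ring

lemma limit_line {W : Type*} [NormedAddCommGroup W] [NormedSpace ℝ W] [FiniteDimensional ℝ W]
    {ε : ℝ} (hε0 : 0 < ε) (hε1 : ε < 1) (y : ℕ → Submodule ℝ W)
    (hline : ∀ n, IsLine (y n)) (hcons : ∀ n, sdist (y n) (y (n + 1)) ≤ 2 * ε ^ (n + 1)) :
    ∃ L : Submodule ℝ W, IsLine L ∧ Tendsto (fun n => sdist (y n) L) atTop (nhds 0) := by
  have step2 : ∀ n (p : {e : W // e ∈ y n ∧ ‖e‖ = 1}),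
      ∃ q : {e : W // e ∈ y (n + 1) ∧ ‖e‖ = 1}, ‖q.1 - p.1‖ ≤ 2 * ε ^ (n + 1) := by
    rintro n ⟨e, he, hen⟩
    obtain ⟨u, hu, hun⟩ := exists_unit_of_isLine (hline (n + 1))
    have hmin : min ‖e - u‖ ‖e + u‖ ≤ sdist (y n) (y (n + 1)) :=
      min_le_sdist_line (hline n) (hline (n + 1)) he hu hen hun
    rcases le_total ‖e - u‖ ‖e + u‖ with h | h
    · refine ⟨⟨u, hu, hun⟩, ?_⟩
      rw [norm_sub_rev]
      calc ‖e - u‖ = min ‖e - u‖ ‖e + u‖ := (min_eq_left h).symm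
        _ ≤ _ := hmin.trans (hcons n)
    · refine ⟨⟨-u, (y (n + 1)).neg_mem hu, by rw [norm_neg]; exact hun⟩, ?_⟩
      have : -u - e = -(e + u) := by abel
      rw [this, norm_neg]
      calc ‖e + u‖ = min ‖e - u‖ ‖e + u‖ := (min_eq_right h).symm
        _ ≤ _ := hmin.trans (hcons n)
  choose g hg using step2
  obtain ⟨e0, he0, he0n⟩ := exists_unit_of_isLine (hline 0)
  let seq : ∀ n, {e : W // e ∈ y n ∧ ‖e‖ = 1} := fun n => Nat.rec ⟨e0, he0, he0n⟩ g n
  let e : ℕ → W := fun n => (seq n).1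
  have hmem : ∀ n, e n ∈ y n := fun n => (seq n).2.1
  have hnorm : ∀ n, ‖e n‖ = 1 := fun n => (seq n).2.2
  have hconsE : ∀ n, ‖e (n + 1) - e n‖ ≤ 2 * ε ^ (n + 1) := fun n => hg n (seq n)
  have hcauchy : CauchySeq e := by
    apply cauchySeq_of_le_geometric ε (2 * ε) hε1
    intro n
    rw [dist_eq_norm, norm_sub_rev]
    calc ‖e (n + 1) - e n‖ ≤ 2 * ε ^ (n + 1) := hconsE n
      _ = 2 * ε * ε ^ n := by ring
  obtain ⟨l, hl⟩ := cauchySeq_tendsto_of_complete hcauchy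
  have hln : ‖l‖ = 1 := by
    have h1 : Tendsto (fun n => ‖e n‖) atTop (nhds ‖l‖) := hl.norm
    have h2 : Tendsto (fun n => ‖e n‖) atTop (nhds 1) := by
      simp only [hnorm]; exact tendsto_const_nhds
    exact tendsto_nhds_unique h1 h2
  have hl0 : l ≠ 0 := by intro h; rw [h, norm_zero] at hln; norm_num at hln
  refine ⟨Submodule.span ℝ {l}, finrank_span_singleton hl0, ?_⟩
  have hbound : ∀ n, sdist (y n) (Submodule.span ℝ {l}) ≤ ‖e n - l‖ := fun n =>
    sdist_le' (hmem n) (Submodule.mem_span_singleton_self l) (hnorm n) hln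
  have htend : Tendsto (fun n => ‖e n - l‖) atTop (nhds 0) := by
    rw [← tendsto_iff_norm_sub_tendsto_zero]
    exact hl
  exact squeeze_zero (fun n => sdist_nonneg' _ _) hbound htend

end KeyClaim

/-- existence of the limit point `ξ((xᵢ))` of an infinite reduced word. -/
theorem statement7 (d r : ℕ) (hd : 2 ≤ d) (ε : ℝ) (hε : ε ∈ Set.Ioo (0 : ℝ) 1)
    (γ : Fin (2 * r) → SL d) (hdist : Function.Injective γ)
    (hprox : ∀ i, IsProximal (toEnd (γ i))) (hsym : SymmFam γ)
    (hS : PrimalSchottky ε γ) (hS' : DualSchottky ε γ)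
    (x : ℕ → SL d) (hx : IsInfReducedWord (Set.range γ) x) :
    ∃ L : Submodule ℝ (E d), IsLine L ∧
      ∀ v : Submodule ℝ (E d), IsLine v →
        (∀ i, ε ≤ sdist v (repHyp (toEnd (γ i)))) →
        Tendsto (fun n => sdist (Submodule.map (toEnd (wordProd x n)) v) L)
          atTop (nhds 0) := by
  obtain ⟨hε0, hε1⟩ := hε
  by_cases hex : ∃ v₀ : Submodule ℝ (E d), IsLine v₀ ∧
      ∀ i, ε ≤ sdist v₀ (repHyp (toEnd (γ i)))
  · obtain ⟨v₀, hv₀, hgood₀⟩ := hex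
    have key := key_claim hε0 hε1 hsym hS
    have hfarx : ∀ (v : Submodule ℝ (E d)), (∀ i, ε ≤ sdist v (repHyp (toEnd (γ i)))) →
        ∀ n, ε ≤ sdist v (repHyp (toEnd (x n))) := by
      intro v hv n
      obtain ⟨i, hi⟩ := hx.1 n
      rw [← hi]; exact hv i
    set y₀ : ℕ → Submodule ℝ (E d) := fun n => Submodule.map (toEnd (wordProd x n)) v₀
      with hy₀
    have hline₀ : ∀ n, IsLine (y₀ n) := fun n =>
      (key n x hx v₀ v₀ hv₀ hv₀ (hfarx v₀ hgood₀ n) (hfarx v₀ hgood₀ n)).1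
    have hcons : ∀ n, sdist (y₀ n) (y₀ (n + 1)) ≤ 2 * ε ^ (n + 1) := by
      intro n
      set w := Submodule.map (toEnd (x (n + 1))) v₀ with hw
      have hwl : IsLine w := isLine_map _ hv₀
      obtain ⟨i1, hi1⟩ := hx.1 (n + 1)
      have hprox : IsEpsProximal ε (toEnd (x (n + 1))) := by rw [← hi1]; exact hS.1 i1
      have hwA : sdist w (attLine (toEnd (x (n + 1)))) ≤ ε :=
        hprox.2.2.2 v₀ hv₀ (hfarx v₀ hgood₀ (n + 1))
      have hfar6 : 6 * ε ≤ sdist (attLine (toEnd (x (n + 1)))) (repHyp (toEnd (x n))) :=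
        schottky_far hsym hS (hx.1 (n + 1)) (hx.1 n) (hx.2 n)
      have hwf : ε ≤ sdist w (repHyp (toEnd (x n))) := far_of_close hε0 hwl hwA hfar6
      have hres := (key n x hx v₀ w hv₀ hwl (hfarx v₀ hgood₀ n) hwf).2.2
      have heq : y₀ (n + 1) = Submodule.map (toEnd (wordProd x n)) w := by
        show Submodule.map (toEnd (wordProd x (n + 1))) v₀ = _
        rw [wordProd_succ_right, toEnd_mul, Submodule.map_comp]
      rw [← heq] at hres
      exact hres
    obtain ⟨L, hL, htend₀⟩ := limit_line hε0 hε1 y₀ hline₀ hcons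
    refine ⟨L, hL, ?_⟩
    intro v hv hgood
    have hunif : ∀ n, sdist (Submodule.map (toEnd (wordProd x n)) v) (y₀ n)
        ≤ 2 * ε ^ (n + 1) :=
      fun n => (key n x hx v v₀ hv hv₀ (hfarx v hgood n) (hfarx v₀ hgood₀ n)).2.2
    have hlinev : ∀ n, IsLine (Submodule.map (toEnd (wordProd x n)) v) := fun n =>
      (key n x hx v v hv hv (hfarx v hgood n) (hfarx v hgood n)).1
    have hLu : ∃ z ∈ L, ‖z‖ = 1 := exists_unit_of_isLine hL
    have hbound : ∀ n, sdist (Submodule.map (toEnd (wordProd x n)) v) L ≤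
        2 * ε ^ (n + 1) + sdist (y₀ n) L := by
      intro n
      have htri := sdist_triangle' (hline₀ n) (exists_unit_of_isLine (hlinev n)) hLu
      linarith [hunif n]
    have h1 : Tendsto (fun n : ℕ => 2 * ε ^ (n + 1)) atTop (nhds 0) := by
      have hp : Tendsto (fun n : ℕ => ε ^ n) atTop (nhds 0) :=
        tendsto_pow_atTop_nhds_zero_of_lt_one hε0.le hε1
      have hp2 := (hp.const_mul (2 * ε))
      simp only [mul_zero] at hp2
      convert hp2 using 2 with n
      ring
    have htendb : Tendsto (fun n => 2 * ε ^ (n + 1) + sdist (y₀ n) L) atTop (nhds 0) := by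
      have := h1.add htend₀
      simpa using this
    exact squeeze_zero (fun n => sdist_nonneg' _ _) hbound htendb
  · have h0 : (0 : ℕ) < d := by omega
    have hl0 : (EuclideanSpace.single (⟨0, h0⟩ : Fin d) (1 : ℝ)) ≠ 0 := by
      intro h
      have h1 : EuclideanSpace.single (⟨0, h0⟩ : Fin d) (1 : ℝ) ⟨0, h0⟩ = 0 := by rw [h]; rfl
      rw [EuclideanSpace.single_apply] at h1
      simp at h1
    refine ⟨Submodule.span ℝ {EuclideanSpace.single (⟨0, h0⟩ : Fin d) (1 : ℝ)},
      finrank_span_singleton hl0, ?_⟩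
    intro v hv hgood
    exact absurd ⟨v, hv, hgood⟩ hex


end Amalgam
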